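/- Let b, g, H, c be positive real numbers such that b/(H c²) > 1/3 and g H/c² > 1. Then for every real number ξ ≠ 0 one has b ξ² + g − c² ξ/tanh(H ξ) > 0. -/

import Mathlib

open Real

lemma aux_sinh_lt {x : ℝ} (hx : 0 < x) : Real.sinh x < x * Real.cosh x := by
  have hd : ∀ y : ℝ, HasDerivAt (fun t => t * Real.cosh t - Real.sinh t)
      (y * Real.sinh y) y := by
    intro y
    have h1 := (hasDerivAt_id y).mul (Real.hasDerivAt_cosh y)
    have h2 := Real.hasDerivAt_sinh y
    refine (h1.sub h2).congr_deriv ?_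
    simp only [id_eq]; ring
  have hmono : StrictMonoOn (fun t => t * Real.cosh t - Real.sinh t) (Set.Ici 0) := by
    apply strictMonoOn_of_deriv_pos (convex_Ici 0)
    · exact Continuous.continuousOn (by continuity)
    · intro y hy
      rw [interior_Ici] at hy
      rw [(hd y).deriv]
      exact mul_pos hy (Real.sinh_pos_iff.mpr hy)
  have := hmono Set.self_mem_Ici (Set.mem_Ici.mpr hx.le) hx
  simpa using this

lemma aux_mul_cosh_lt {x : ℝ} (hx : 0 < x) :
    x * Real.cosh x < (1 + x ^ 2 / 3) * Real.sinh x := by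
  have hd : ∀ y : ℝ, HasDerivAt (fun t => (1 + t ^ 2 / 3) * Real.sinh t - t * Real.cosh t)
      (y / 3 * (y * Real.cosh y - Real.sinh y)) y := by
    intro y
    have h1 : HasDerivAt (fun t : ℝ => 1 + t ^ 2 / 3) (2 * y / 3) y := by
      have := ((hasDerivAt_pow 2 y).div_const 3).const_add 1
      simpa using this.congr_deriv (by ring)
    have h2 := h1.mul (Real.hasDerivAt_sinh y)
    have h3 := (hasDerivAt_id y).mul (Real.hasDerivAt_cosh y)
    refine (h2.sub h3).congr_deriv ?_
    simp only [id_eq]; ring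
  have hmono : StrictMonoOn (fun t => (1 + t ^ 2 / 3) * Real.sinh t - t * Real.cosh t)
      (Set.Ici 0) := by
    apply strictMonoOn_of_deriv_pos (convex_Ici 0)
    · exact Continuous.continuousOn (by continuity)
    · intro y hy
      rw [interior_Ici] at hy
      rw [(hd y).deriv]
      have := aux_sinh_lt hy
      have hy' : (0:ℝ) < y := hy
      have h4 : 0 < y * Real.cosh y - Real.sinh y := by linarith
      have : (0:ℝ) < y / 3 := by linarith
      exact mul_pos this h4
  have := hmono Set.self_mem_Ici (Set.mem_Ici.mpr hx.le) hx
  simp at this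
  linarith

lemma aux_div_tanh_lt {x : ℝ} (hx : x ≠ 0) : x / Real.tanh x < 1 + x ^ 2 / 3 := by
  have key : ∀ y : ℝ, 0 < y → y / Real.tanh y < 1 + y ^ 2 / 3 := by
    intro y hy
    have hs : 0 < Real.sinh y := Real.sinh_pos_iff.mpr hy
    have hc : 0 < Real.cosh y := Real.cosh_pos y
    rw [Real.tanh_eq_sinh_div_cosh, div_div_eq_mul_div, div_lt_iff₀ hs]
    exact aux_mul_cosh_lt hy
  rcases hx.lt_or_gt with h | h
  · have := key (-x) (by linarith)
    rw [Real.tanh_neg] at this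
    simpa [neg_div_neg_eq] using this
  · exact key x h

/-- Positivity of the symbol `m(ξ) = b ξ² + g − c² ξ / tanh(Hξ)` of the linearized
gravity–capillary water-waves operator in the strong surface tension regime. -/
theorem water_waves_symbol_pos
    (b g H c : ℝ) (hb : 0 < b) (hg : 0 < g) (hH : 0 < H) (hc : 0 < c)
    (hβ : 1 / 3 < b / (H * c ^ 2)) (hα : 1 < g * H / c ^ 2) :
    ∀ ξ : ℝ, ξ ≠ 0 → 0 < b * ξ ^ 2 + g - c ^ 2 * ξ / Real.tanh (H * ξ) := by
  intro ξ hξ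
  have hx : H * ξ ≠ 0 := mul_ne_zero hH.ne' hξ
  have hkey := aux_div_tanh_lt hx
  have hHc : (0:ℝ) < H * c ^ 2 := by positivity
  have hc2 : (0:ℝ) < c ^ 2 := by positivity
  have hb' : H * c ^ 2 / 3 < b := by
    rw [div_lt_div_iff₀ (by norm_num) hHc] at hβ; linarith
  have hg' : c ^ 2 / H < g := by
    rw [lt_div_iff₀ hc2, one_mul] at hα
    rw [div_lt_iff₀ hH]; linarith
  -- c^2 * ξ / tanh (H ξ) = (c^2/H) * ((Hξ)/tanh(Hξ))
  have hrw : c ^ 2 * ξ / Real.tanh (H * ξ) =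
      (c ^ 2 / H) * ((H * ξ) / Real.tanh (H * ξ)) := by
    have ht : Real.tanh (H * ξ) ≠ 0 := by
      rw [Real.tanh_eq_sinh_div_cosh]
      exact div_ne_zero (Real.sinh_ne_zero.mpr hx) (Real.cosh_pos _).ne'
    field_simp
  rw [hrw]
  have hpos : 0 < c ^ 2 / H := by positivity
  have h2 : (c ^ 2 / H) * ((H * ξ) / Real.tanh (H * ξ)) <
      (c ^ 2 / H) * (1 + (H * ξ) ^ 2 / 3) := by
    exact (mul_lt_mul_iff_right₀ hpos).mpr hkey
  have hξ2 : 0 < ξ ^ 2 := by positivity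
  have hexp : (c ^ 2 / H) * (1 + (H * ξ) ^ 2 / 3) = c ^ 2 / H + (H * c ^ 2 / 3) * ξ ^ 2 := by
    field_simp
  nlinarith [mul_lt_mul_of_pos_right hb' hξ2]
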